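/- Let G(y) = dist(y, closed unit ball)⁴ on a Hilbert space H. Then G is twice Fréchet differentiable at every y with |y| ≠ 1, and G′(y)(v) = 4 g(y) ⟨y − π(y), v⟩ and G″(y)(h,v) = 8⟨y−π(y), h⟩⟨y−π(y), v⟩ + 4 g(y)·1_{|y|>1}[⟨h,v⟩(1 − 1/|y|) + |y|^{-3}⟨y,h⟩⟨y,v⟩], where g(y) = dist(y, closed unit ball)² and π is the projection onto the closed unit ball. -/

import Mathlib

open scoped RealInnerProductSpace

noncomputable def proj {H : Type*} [NormedAddCommGroup H] [InnerProductSpace ℝ H]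
    (y : H) : H := if ‖y‖ ≤ 1 then y else ‖y‖⁻¹ • y

noncomputable def gfun {H : Type*} [NormedAddCommGroup H] [InnerProductSpace ℝ H]
    (y : H) : ℝ := (Metric.infDist y (Metric.closedBall (0 : H) 1)) ^ 2

noncomputable def Gfun {H : Type*} [NormedAddCommGroup H] [InnerProductSpace ℝ H]
    (y : H) : ℝ := (Metric.infDist y (Metric.closedBall (0 : H) 1)) ^ 4

section aux
variable {H : Type*} [NormedAddCommGroup H] [InnerProductSpace ℝ H]

lemma infDist_unitBall (z : H) :
    Metric.infDist z (Metric.closedBall (0 : H) 1) = max (‖z‖ - 1) 0 := by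
  rcases le_or_gt ‖z‖ 1 with h | h
  · rw [Metric.infDist_zero_of_mem (by simpa using h), max_eq_right (by linarith)]
  · have hz0 : ‖z‖ ≠ 0 := by linarith
    rw [max_eq_left (by linarith)]
    apply le_antisymm
    · have hmem : ‖z‖⁻¹ • z ∈ Metric.closedBall (0 : H) 1 := by
        simp only [Metric.mem_closedBall, dist_zero_right, norm_smul, norm_inv, norm_norm]
        rw [inv_mul_cancel₀ hz0]
      refine (Metric.infDist_le_dist_of_mem hmem).trans_eq ?_
      rw [dist_eq_norm]
      have h1 : z - ‖z‖⁻¹ • z = (1 - ‖z‖⁻¹) • z := by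
        rw [sub_smul, one_smul]
      rw [h1, norm_smul, Real.norm_eq_abs, abs_of_nonneg (by
        rw [sub_nonneg]; exact inv_le_one_of_one_le₀ h.le)]
      field_simp
    · by_contra hlt
      push_neg at hlt
      obtain ⟨w, hw, hdw⟩ := (Metric.infDist_lt_iff ⟨0, by simp⟩).1 hlt
      simp only [Metric.mem_closedBall, dist_zero_right] at hw
      have : ‖z‖ - ‖w‖ ≤ dist z w := by
        rw [dist_eq_norm]; exact norm_sub_norm_le z w
      linarith

lemma norm_hasFDerivAt {x : H} (hx : x ≠ 0) :
    HasFDerivAt (fun z : H => ‖z‖) (‖x‖⁻¹ • innerSL ℝ x) x := by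
  have hx0 : ‖x‖ ≠ 0 := norm_ne_zero_iff.2 hx
  have h1 : HasFDerivAt (fun z : H => ‖z‖ ^ 2) (2 • innerSL ℝ x) x := by
    simpa using (hasFDerivAt_id x).norm_sq
  have h2 : HasDerivAt Real.sqrt (1 / (2 * Real.sqrt (‖x‖ ^ 2))) (‖x‖ ^ 2) :=
    Real.hasDerivAt_sqrt (pow_ne_zero 2 hx0)
  have h3 := h2.comp_hasFDerivAt x h1
  have heq : (Real.sqrt ∘ fun z : H => ‖z‖ ^ 2) = fun z : H => ‖z‖ := by
    funext z; simp [Function.comp, Real.sqrt_sq (norm_nonneg z)]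
  rw [heq] at h3
  convert h3 using 1
  · rfl
  · rfl
  rw [Real.sqrt_sq (norm_nonneg x)]
  ext v
  simp only [ContinuousLinearMap.coe_smul', Pi.smul_apply, ContinuousLinearMap.smul_apply]
  rw [smul_eq_mul, smul_eq_mul, two_smul]
  field_simp
  ring

end aux

section aux2
variable {H : Type*} [NormedAddCommGroup H] [InnerProductSpace ℝ H]

noncomputable def rinnerSL : H →L[ℝ] H →L[ℝ] ℝ := innerSL ℝ

@[simp] lemma rinnerSL_apply (x v : H) : rinnerSL x v = ⟪x, v⟫ := rfl

noncomputable def Dmap (z : H) : H →L[ℝ] ℝ :=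
  (4 * (‖z‖ - 1) ^ 3 * ‖z‖⁻¹) • innerSL ℝ z

lemma F_hasFDerivAt {z : H} (hz : z ≠ 0) :
    HasFDerivAt (fun w : H => (‖w‖ - 1) ^ 4) (Dmap z) z := by
  have h1 := norm_hasFDerivAt hz
  have h2 : HasDerivAt (fun t : ℝ => (t - 1) ^ 4) (4 * (‖z‖ - 1) ^ 3) ‖z‖ := by
    have := ((hasDerivAt_id ‖z‖).sub_const 1).pow 4
    simpa [Pi.pow_def] using this
  have h3 := h2.comp_hasFDerivAt z h1
  have : ((fun t : ℝ => (t - 1) ^ 4) ∘ fun z : H => ‖z‖) = fun w : H => (‖w‖ - 1) ^ 4 := rfl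
  rw [this] at h3
  convert h3 using 1
  · rfl
  · rfl
  rw [Dmap, smul_smul, mul_assoc]

noncomputable def D2map (y : H) : H →L[ℝ] H →L[ℝ] ℝ :=
  (4 * (‖y‖ - 1) ^ 3 * ‖y‖⁻¹) • rinnerSL +
    (((12 * (‖y‖ - 1) ^ 2 * ‖y‖⁻¹ - 4 * (‖y‖ - 1) ^ 3 * (‖y‖ ^ 2)⁻¹) •
      (‖y‖⁻¹ • rinnerSL y)).smulRight (rinnerSL y))

lemma Dmap_hasFDerivAt {y : H} (hy : y ≠ 0) :
    HasFDerivAt (Dmap (H := H)) (D2map y) y := by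
  have hy0 : ‖y‖ ≠ 0 := norm_ne_zero_iff.2 hy
  have hφ : HasDerivAt (fun t : ℝ => 4 * (t - 1) ^ 3 * t⁻¹)
      (12 * (‖y‖ - 1) ^ 2 * ‖y‖⁻¹ - 4 * (‖y‖ - 1) ^ 3 * (‖y‖ ^ 2)⁻¹) ‖y‖ := by
    have h1 : HasDerivAt (fun t : ℝ => 4 * (t - 1) ^ 3) (4 * (3 * (‖y‖ - 1) ^ 2)) ‖y‖ := by
      simpa using (((hasDerivAt_id ‖y‖).sub_const 1).pow 3).const_mul 4
    have h2 : HasDerivAt (fun t : ℝ => t⁻¹) (-(‖y‖ ^ 2)⁻¹) ‖y‖ := by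
      simpa using hasDerivAt_inv hy0
    have := h1.mul h2
    convert this using 1
    · rfl
    · rfl
    · rfl
    ring
  have hc : HasFDerivAt (fun z : H => 4 * (‖z‖ - 1) ^ 3 * ‖z‖⁻¹)
      ((12 * (‖y‖ - 1) ^ 2 * ‖y‖⁻¹ - 4 * (‖y‖ - 1) ^ 3 * (‖y‖ ^ 2)⁻¹) •
        (‖y‖⁻¹ • innerSL ℝ y)) y := by
    have := hφ.comp_hasFDerivAt y (norm_hasFDerivAt hy)
    exact this
  have hf : HasFDerivAt (fun z : H => rinnerSL z) rinnerSL y :=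
    rinnerSL.hasFDerivAt
  have := hc.smul hf
  unfold Dmap D2map
  exact this

end aux2

/-- At every point `y` with `‖y‖ ≠ 1`, the function `G = dist(·, B̄(0,1))⁴` is
twice (Fréchet) differentiable, with
`G′(y)(v) = 4 g(y) ⟪y − π(y), v⟫` and
`G″(y)(h,v) = 8⟪y−π(y),h⟫⟪y−π(y),v⟫
  + 4 g(y)·1_{‖y‖>1}[⟪h,v⟫(1 − ‖y‖⁻¹) + ‖y‖⁻³⟪y,h⟫⟪y,v⟫]`. -/
theorem Gfun_second_derivative {H : Type*} [NormedAddCommGroup H]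
    [InnerProductSpace ℝ H] [CompleteSpace H] (y : H) (hy : ‖y‖ ≠ 1) :
    ContDiffAt ℝ 2 Gfun y ∧
    (∀ v : H, fderiv ℝ Gfun y v = 4 * gfun y * ⟪y - proj y, v⟫) ∧
    (∀ h v : H, fderiv ℝ (fun z => fderiv ℝ Gfun z) y h v =
      8 * ⟪y - proj y, h⟫ * ⟪y - proj y, v⟫ +
        4 * gfun y *
          (if 1 < ‖y‖ then
            ⟪h, v⟫ * (1 - ‖y‖⁻¹) + (‖y‖ ^ 3)⁻¹ * ⟪y, h⟫ * ⟪y, v⟫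
          else 0)) := by
  rcases lt_or_gt_of_ne hy with hlt | hgt
  · -- inside the ball: everything vanishes locally
    have hmem : Metric.ball (0 : H) 1 ∈ nhds y := by
      exact Metric.isOpen_ball.mem_nhds (by simpa using hlt)
    have hev : Gfun =ᶠ[nhds y] fun _ => (0 : ℝ) := by
      filter_upwards [hmem] with z hz
      simp only [Metric.mem_ball, dist_zero_right] at hz
      simp [Gfun, infDist_unitBall, max_eq_right (by linarith : ‖z‖ - 1 ≤ 0)]
    have hg0 : gfun y = 0 := by
      simp [gfun, infDist_unitBall, max_eq_right (by linarith : ‖y‖ - 1 ≤ 0)]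
    have hproj : proj y = y := if_pos hlt.le
    refine ⟨(contDiffAt_const (c := (0:ℝ))).congr_of_eventuallyEq hev, ?_, ?_⟩
    · intro v
      rw [hev.fderiv_eq, fderiv_fun_const]
      simp [hg0]
    · intro h v
      have hev2 : (fun z => fderiv ℝ Gfun z) =ᶠ[nhds y] fun _ => (0 : H →L[ℝ] ℝ) := by
        have hopen : ∀ z ∈ Metric.ball (0 : H) 1, Gfun =ᶠ[nhds z] fun _ => (0 : ℝ) := by
          intro z hz
          filter_upwards [Metric.isOpen_ball.mem_nhds hz] with w hw
          simp only [Metric.mem_ball, dist_zero_right] at hw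
          simp [Gfun, infDist_unitBall, max_eq_right (by linarith : ‖w‖ - 1 ≤ 0)]
        filter_upwards [hmem] with z hz
        rw [(hopen z hz).fderiv_eq, fderiv_fun_const]
        rfl
      rw [hev2.fderiv_eq, fderiv_fun_const]
      simp [hg0, hproj, not_lt.2 hlt.le]
  · -- outside: Gfun = (‖z‖ - 1)^4 locally
    have hy0 : y ≠ 0 := by intro h; rw [h] at hgt; norm_num at hgt
    have hn0 : ‖y‖ ≠ 0 := norm_ne_zero_iff.2 hy0
    have hmem : {z : H | 1 < ‖z‖} ∈ nhds y :=
      (isOpen_lt continuous_const continuous_norm).mem_nhds hgt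
    have hevz : ∀ z : H, 1 < ‖z‖ → Gfun =ᶠ[nhds z] fun w => (‖w‖ - 1) ^ 4 := by
      intro z hz
      filter_upwards [(isOpen_lt continuous_const continuous_norm).mem_nhds hz] with w hw
      simp [Gfun, infDist_unitBall, max_eq_left (by linarith : (0:ℝ) ≤ ‖w‖ - 1)]
    have hev : Gfun =ᶠ[nhds y] fun w => (‖w‖ - 1) ^ 4 := hevz y hgt
    have hg : gfun y = (‖y‖ - 1) ^ 2 := by
      simp [gfun, infDist_unitBall, max_eq_left (by linarith : (0:ℝ) ≤ ‖y‖ - 1)]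
    have hproj : proj y = ‖y‖⁻¹ • y := if_neg (not_le.2 hgt)
    have hsub : ∀ v : H, ⟪y - proj y, v⟫ = (1 - ‖y‖⁻¹) * ⟪y, v⟫ := by
      intro v
      rw [hproj, show y - ‖y‖⁻¹ • y = (1 - ‖y‖⁻¹) • y by rw [sub_smul, one_smul],
        real_inner_smul_left]
    have hF : ContDiffAt ℝ 2 (fun w : H => (‖w‖ - 1) ^ 4) y := by
      have hin : ContDiffAt ℝ 2 (fun w : H => ‖w‖ - 1) y :=
        (contDiffAt_norm ℝ hy0).sub contDiffAt_const
      have h1 : ContDiff ℝ 2 (fun t : ℝ => t ^ 4) := contDiff_id.pow 4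
      exact h1.contDiffAt.comp y hin
    have hfd : fderiv ℝ Gfun y = Dmap y := by
      rw [hev.fderiv_eq, (F_hasFDerivAt hy0).fderiv]
    refine ⟨hF.congr_of_eventuallyEq hev, ?_, ?_⟩
    · intro v
      rw [hfd]
      simp only [Dmap, ContinuousLinearMap.coe_smul', Pi.smul_apply, smul_eq_mul,
        innerSL_apply_apply]
      rw [hsub, hg]
      field_simp
    · intro h v
      have hev2 : (fun z => fderiv ℝ Gfun z) =ᶠ[nhds y] Dmap := by
        filter_upwards [hmem] with z hz
        have hz0 : z ≠ 0 := by
          intro h; rw [h] at hz; norm_num at hz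
        rw [(hevz z hz).fderiv_eq, (F_hasFDerivAt hz0).fderiv]
      rw [hev2.fderiv_eq, (Dmap_hasFDerivAt hy0).fderiv]
      rw [if_pos hgt, hsub, hsub, hg]
      simp only [D2map, ContinuousLinearMap.add_apply, ContinuousLinearMap.coe_smul',
        Pi.smul_apply, ContinuousLinearMap.smulRight_apply, ContinuousLinearMap.smul_apply,
        rinnerSL_apply, smul_eq_mul]
      have h3 : (‖y‖ ^ 3)⁻¹ = ‖y‖⁻¹ * (‖y‖ ^ 2)⁻¹ := by
        rw [← mul_inv]; ring_nf
      field_simp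
      ring
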